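/- Let φ₀(x) = x²/2 for |x| ≤ 1 and φ₀(x) = |x| − 1/2 for |x| > 1, and for C₁, h > 0 set φ₁(x) = φ₀(x/h)/C₁. Let f: ℝ → ℝ be a convex function whose derivative (where defined) satisfies |f′| ≤ 1/(C₁h), and suppose f attains its minimum at x₀. For x ≥ x₀ + h, the infimum convolution (f □ φ₁)(x) = inf_y (f(y) + φ₁(x−y)) satisfies (f □ φ₁)(x) ≤ f(x) − (C₁/2)(f(x) − f(x−h))². -/

import Mathlib

open Real

theorem stmt5 (C₁ h : ℝ) (hC : 0 < C₁) (hh : 0 < h)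
    (φ₀ : ℝ → ℝ)
    (hφ₀ : ∀ x : ℝ, φ₀ x = if |x| ≤ 1 then x ^ 2 / 2 else |x| - 1 / 2)
    (φ₁ : ℝ → ℝ) (hφ₁ : ∀ x, φ₁ x = φ₀ (x / h) / C₁)
    (f : ℝ → ℝ) (hconv : ConvexOn ℝ Set.univ f)
    (hlip : ∀ x y : ℝ, |f x - f y| ≤ (1 / (C₁ * h)) * |x - y|)
    (x₀ : ℝ) (hmin : ∀ x, f x₀ ≤ f x) :
    ∀ x : ℝ, x₀ + h ≤ x →
      (⨅ y : ℝ, (f y + φ₁ (x - y))) ≤ f x - (C₁ / 2) * (f x - f (x - h)) ^ 2 := by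
  intro x hx
  have hφ₀nn : ∀ z : ℝ, 0 ≤ φ₀ z := by
    intro z
    rw [hφ₀]
    split_ifs with hz
    · positivity
    · push_neg at hz; linarith
  have hbdd : BddBelow (Set.range fun y => f y + φ₁ (x - y)) := by
    refine ⟨f x₀, ?_⟩
    rintro _ ⟨y, rfl⟩
    have h1 := hmin y
    have h2 : 0 ≤ φ₁ (x - y) := by
      rw [hφ₁]
      exact div_nonneg (hφ₀nn _) hC.le
    dsimp only
    linarith
  set D : ℝ := f x - f (x - h) with hD
  -- D ≥ 0 : monotonicity of convex f right of the minimum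
  have hDnn : 0 ≤ D := by
    have hxx : (0:ℝ) < x - x₀ := by linarith
    set l : ℝ := h / (x - x₀) with hl
    have hl0 : 0 ≤ l := by positivity
    have hl1 : l ≤ 1 := by
      rw [hl, div_le_one hxx]; linarith
    have hcomb := hconv.2 (Set.mem_univ x₀) (Set.mem_univ x) hl0 (by linarith : (0:ℝ) ≤ 1 - l) (by ring)
    have heq : l • x₀ + (1 - l) • x = x - h := by
      simp only [smul_eq_mul]
      field_simp [hl]
      have h5 : l * (x - x₀) = h := by rw [hl]; exact div_mul_cancel₀ h hxx.ne'
      linarith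
    rw [heq] at hcomb
    simp only [smul_eq_mul] at hcomb
    have hfx : f x₀ ≤ f x := hmin x
    nlinarith [mul_nonneg hl0 (sub_nonneg.2 hfx)]
  have hD1 : D ≤ 1 / C₁ := by
    have h1 := hlip x (x - h)
    have h2 : |x - (x - h)| = h := by rw [abs_of_pos]; ring; linarith
    rw [h2] at h1
    have h3 : (1 / (C₁ * h)) * h = 1 / C₁ := by field_simp
    calc D ≤ |D| := le_abs_self _
      _ ≤ 1 / C₁ := by rw [hD]; linarith
  set t : ℝ := C₁ * h * D with ht
  have hfxh : f (x - h) = f x - D := by rw [hD]; ring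
  clear_value D
  have hth : t / h = C₁ * D := by field_simp [ht]; ring
  have hth0 : 0 ≤ t / h := by rw [hth]; positivity
  have hth1 : t / h ≤ 1 := by
    rw [hth]
    calc C₁ * D ≤ C₁ * (1 / C₁) := by nlinarith
      _ = 1 := by field_simp
  -- convexity at x - t
  have hcomb := hconv.2 (Set.mem_univ (x - h)) (Set.mem_univ x) hth0 (by linarith : (0:ℝ) ≤ 1 - t / h) (by ring)
  have heq : (t / h) • (x - h) + (1 - t / h) • x = x - t := by
    simp only [smul_eq_mul]
    field_simp
    ring
  rw [heq] at hcomb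
  have hft : f (x - t) ≤ f x - C₁ * D ^ 2 := by
    simp only [smul_eq_mul] at hcomb
    rw [hth, hfxh] at hcomb
    nlinarith [hcomb]
  have hφt : φ₁ (x - (x - t)) = C₁ * D ^ 2 / 2 := by
    have hxt : x - (x - t) = t := by ring
    rw [hxt, hφ₁, hφ₀, hth]
    rw [abs_of_nonneg (by positivity : (0:ℝ) ≤ C₁ * D)]
    have hC₁D1 : C₁ * D ≤ 1 := hth ▸ hth1
    rw [if_pos hC₁D1]
    field_simp
  have key : f (x - t) + φ₁ (x - (x - t)) ≤ f x - (C₁ / 2) * D ^ 2 := by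
    rw [hφt]; nlinarith [hft]
  calc (⨅ y : ℝ, (f y + φ₁ (x - y))) ≤ f (x - t) + φ₁ (x - (x - t)) := ciInf_le hbdd (x - t)
    _ ≤ f x - (C₁ / 2) * D ^ 2 := key
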